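/- Let k: ℤ → [0,∞) be a nontrivial kernel with k(0)=0, k(−j)=k(j) for all j ∈ ℤ, and ∑_{j∈ℤ} k(j) < ∞. Suppose that Ĉ_δ(k) := ∑_{j∈ℤ} k(j)^{1−δ} < ∞ for some δ ∈ (0,1), and set γ = (1+δ)/δ. Then there exists a constant c > 0 such that for every x ∈ ℤ and every bounded u: ℤ → ℝ one has Ψ_{2,Υ}(u)(x) ≥ c·|Lu(x)|^γ. -/

import Mathlib

open scoped BigOperators
open Filter Set

noncomputable section

/-- `Υ(r) = e^r − 1 − r`. -/
def Ups (r : ℝ) : ℝ := Real.exp r - 1 - r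

/-- `H(x) = (1/2) e^{−x} Υ(2x)`. -/
def Hfun (x : ℝ) : ℝ := (1 / 2) * Real.exp (-x) * Ups (2 * x)

/-- The long-range jump operator `L u (x) = ∑_{j∈ℤ} k(j)(u(x+j) − u(x))`. -/
def Lop (k : ℤ → ℝ) (u : ℤ → ℝ) (x : ℤ) : ℝ := ∑' j : ℤ, k j * (u (x + j) - u x)

/-- `Ψ_Υ(u)(x) = ∑_{j∈ℤ} k(j) Υ(u(x+j) − u(x))`. -/
def PsiUps (k : ℤ → ℝ) (u : ℤ → ℝ) (x : ℤ) : ℝ := ∑' j : ℤ, k j * Ups (u (x + j) - u x)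

/-- `Ψ_{2,Υ}(u)(x)`. -/
def Psi2 (k : ℤ → ℝ) (u : ℤ → ℝ) (x : ℤ) : ℝ :=
  (1 / 2) * ∑' p : ℤ × ℤ, k p.1 * k p.2 * Real.exp (u (x + p.2) - u x) *
    Ups (u (x + p.1 + p.2) - u (x + p.1) - u (x + p.2) + u x)

/-- A bounded function on `ℤ`. -/
def BddFun (u : ℤ → ℝ) : Prop := ∃ M : ℝ, ∀ x : ℤ, |u x| ≤ M

/-- A nontrivial symmetric integrable kernel on `ℤ` vanishing at `0`. -/
structure IsKernel (k : ℤ → ℝ) : Prop where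
  nonneg : ∀ j, 0 ≤ k j
  zero_at_zero : k 0 = 0
  symm : ∀ j, k (-j) = k j
  summable : Summable k
  nontrivial : ∃ j, k j ≠ 0

/-- A CD-function: continuous on `[0,∞)`, nonnegative, `F(0)=0`, `r ↦ F(r)/r` strictly
increasing on `(0,∞)` and `1/F` integrable at `∞`. -/
def IsCDFunction (F : ℝ → ℝ) : Prop :=
  ContinuousOn F (Ici 0) ∧ (∀ r, 0 ≤ r → 0 ≤ F r) ∧ F 0 = 0 ∧
    StrictMonoOn (fun r => F r / r) (Ioi 0) ∧
    ∃ a, 0 < a ∧ MeasureTheory.IntegrableOn (fun r => 1 / F r) (Ici a)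

/-- The curvature-dimension condition `CD_Υ(0,F)` for the operator generated by `k`. -/
def CDUps (k : ℤ → ℝ) (F : ℝ → ℝ) : Prop :=
  ∀ u : ℤ → ℝ, BddFun u → ∀ x : ℤ, 0 ≤ -Lop k u x → F (-Lop k u x) ≤ Psi2 k u x

lemma Ups_nonneg (r : ℝ) : 0 ≤ Ups r := by
  have := Real.add_one_le_exp r
  simp only [Ups]; linarith

lemma sq_le_two_mul_Ups {z : ℝ} (hz : 0 ≤ z) : z ^ 2 ≤ 2 * Ups z := by
  have h := Real.sum_le_exp_of_nonneg hz 3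
  simp [Finset.sum_range_succ, Nat.factorial] at h
  simp only [Ups]
  nlinarith

lemma pow_le_factorial_mul_Ups {m : ℕ} (hm : 2 ≤ m) {z : ℝ} (hz : 1 ≤ z) :
    z ^ m ≤ (m.factorial : ℝ) * Ups z := by
  have hz0 : (0:ℝ) ≤ z := by linarith
  have h1 : ∑ i ∈ Finset.range (m + 1), z ^ i / (i.factorial : ℝ) ≤ Real.exp z :=
    Real.sum_le_exp_of_nonneg hz0 (m + 1)
  have h2 : (1 : ℝ) + z ≤ ∑ i ∈ Finset.range m, z ^ i / (i.factorial : ℝ) := by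
    have hs : ∑ i ∈ Finset.range 2, z ^ i / (i.factorial : ℝ)
        ≤ ∑ i ∈ Finset.range m, z ^ i / (i.factorial : ℝ) :=
      Finset.sum_le_sum_of_subset_of_nonneg (Finset.range_subset_range.2 hm)
        (fun i _ _ => by positivity)
    simpa [Finset.sum_range_succ, Nat.factorial] using hs
  rw [Finset.sum_range_succ] at h1
  have hfac : (0:ℝ) < (m.factorial : ℝ) := by exact_mod_cast Nat.factorial_pos m
  have : (1:ℝ) + z + z ^ m / (m.factorial : ℝ) ≤ Real.exp z := by linarith
  have h3 : z ^ m / (m.factorial : ℝ) ≤ Real.exp z - 1 - z := by linarith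
  rw [div_le_iff₀ hfac] at h3
  simp only [Ups]
  linarith

lemma rpow_le_factorial_mul_Ups {γ : ℝ} (hγ : 2 ≤ γ) {z : ℝ} (hz : 0 ≤ z) :
    z ^ γ ≤ ((Nat.ceil γ).factorial : ℝ) * Ups z := by
  set m := Nat.ceil γ with hmdef
  have hγm : γ ≤ (m : ℝ) := Nat.le_ceil γ
  have hm2 : 2 ≤ m := by
    have : (2 : ℝ) ≤ (m : ℝ) := le_trans hγ hγm
    exact_mod_cast this
  have hfac2 : (2 : ℝ) ≤ (m.factorial : ℝ) := by
    have h2 : (2:ℕ).factorial ≤ m.factorial := Nat.factorial_le hm2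
    have : (2:ℕ).factorial = 2 := rfl
    rw [this] at h2
    exact_mod_cast h2
  rcases le_total z 1 with h1 | h1
  · rcases eq_or_lt_of_le hz with h0 | h0
    · rw [← h0, Real.zero_rpow (by linarith)]
      have := Ups_nonneg (0:ℝ)
      positivity
    · have step1 : z ^ γ ≤ z ^ (2:ℝ) :=
        Real.rpow_le_rpow_of_exponent_ge h0 h1 hγ
      have step2 : z ^ (2:ℝ) = z ^ 2 := by
        rw [← Real.rpow_natCast z 2]; norm_num
      have := sq_le_two_mul_Ups hz
      have hU := Ups_nonneg z
      calc z ^ γ ≤ z ^ 2 := by rw [← step2]; exact step1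
        _ ≤ 2 * Ups z := this
        _ ≤ (m.factorial : ℝ) * Ups z := by nlinarith
  · have step1 : z ^ γ ≤ z ^ (m : ℝ) :=
      Real.rpow_le_rpow_of_exponent_le h1 hγm
    have step2 : z ^ ((m : ℕ) : ℝ) = z ^ m := Real.rpow_natCast z m
    have := pow_le_factorial_mul_Ups hm2 h1
    calc z ^ γ ≤ z ^ m := by rw [← step2]; exact step1
      _ ≤ (m.factorial : ℝ) * Ups z := this

lemma two_exp_avg_le (a c : ℝ) :
    2 * Real.exp ((a + c) / 2) ≤ Real.exp a + Real.exp c := by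
  have ha : Real.exp a = Real.exp (a/2) * Real.exp (a/2) := by
    rw [← Real.exp_add]; ring_nf
  have hc : Real.exp c = Real.exp (c/2) * Real.exp (c/2) := by
    rw [← Real.exp_add]; ring_nf
  have hac : Real.exp ((a + c)/2) = Real.exp (a/2) * Real.exp (c/2) := by
    rw [← Real.exp_add]; ring_nf
  nlinarith [sq_nonneg (Real.exp (a/2) - Real.exp (c/2))]

lemma Ups_abs_half_le (s : ℝ) : Ups (|s| / 2) ≤ Real.exp (s / 2) * Ups (-s) := by
  rcases le_total 0 s with h | h
  · rw [abs_of_nonneg h]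
    set A := Real.exp (s/2) with hA
    set B := Real.exp (-(s/2)) with hB
    have hA0 : 0 < A := Real.exp_pos _
    have hB0 : 0 < B := Real.exp_pos _
    have hAB : A * B = 1 := by rw [hA, hB, ← Real.exp_add]; simp
    have hexpneg : Real.exp (-s) = B * B := by rw [hB, ← Real.exp_add]; ring_nf
    have hBlb : 1 - s/2 ≤ B := by
      have := Real.add_one_le_exp (-(s/2)); rw [← hB] at this; linarith
    have hkey : A * (1 - s/2) ≤ 1 := by
      calc A * (1 - s/2) ≤ A * B := mul_le_mul_of_nonneg_left hBlb hA0.le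
        _ = 1 := hAB
    simp only [Ups, hexpneg, ← hA]
    nlinarith
  · rw [abs_of_nonpos h]
    set t := -s with ht
    have ht0 : 0 ≤ t := by simp [ht]; linarith
    set A := Real.exp (t/2) with hA
    have hA0 : 0 < A := Real.exp_pos _
    have hAlb : 1 + t/2 ≤ A := by
      have := Real.add_one_le_exp (t/2); rw [← hA] at this; linarith
    have hexp : Real.exp t = A * A := by rw [hA, ← Real.exp_add]; ring_nf
    have hs2 : Real.exp (s/2) = A⁻¹ := by
      rw [hA, ← Real.exp_neg]; congr 1; rw [ht]; ring
    have hns : -s = t := by rw [ht]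
    simp only [Ups, hns, hs2, hexp]
    rw [inv_mul_eq_div, le_div_iff₀ hA0]
    nlinarith


/-- Theorem (basic CD result): if `Ĉ_δ(k) = ∑_j k(j)^{1−δ} < ∞` for some `δ ∈ (0,1)`, then
there is `c > 0` such that `Ψ_{2,Υ}(u)(x) ≥ c |Lu(x)|^γ` with `γ = (1+δ)/δ` for every `x` and
every bounded `u`. -/
theorem basic_CD (k : ℤ → ℝ) (hk : IsKernel k) (δ : ℝ) (hδ0 : 0 < δ) (hδ1 : δ < 1)
    (hsum : Summable fun j : ℤ => k j ^ (1 - δ)) :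
    ∃ c : ℝ, 0 < c ∧ ∀ x : ℤ, ∀ u : ℤ → ℝ, BddFun u →
      c * |Lop k u x| ^ ((1 + δ) / δ) ≤ Psi2 k u x := by

  classical
  obtain ⟨j₀, hj₀⟩ := hk.nontrivial
  have hδ0' : (0:ℝ) < 1 + δ := by linarith
  set γ : ℝ := (1 + δ) / δ with hγdef
  have hγ2 : 2 ≤ γ := by rw [hγdef, le_div_iff₀ hδ0]; linarith
  have hγ1 : 1 < γ := by linarith
  set θ : ℝ := δ / (1 + δ) with hθdef
  have hθ0 : 0 < θ := by positivity
  have hθ1 : θ < 1 := by rw [hθdef, div_lt_one hδ0']; linarith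
  have hθγ : θ * γ = 1 := by
    rw [hθdef, hγdef]; field_simp
  have hγθ : γ * θ = 1 := by rw [mul_comm]; exact hθγ
  set m := Nat.ceil γ with hmdef
  set C₀ : ℝ := (m.factorial : ℝ) with hC₀
  have hC₀pos : 0 < C₀ := by rw [hC₀]; exact_mod_cast Nat.factorial_pos m
  set Chat : ℝ := ∑' j : ℤ, k j ^ (1 - δ) with hChat
  have hChatpos : 0 < Chat := by
    have hkj₀ : 0 < k j₀ := lt_of_le_of_ne (hk.nonneg j₀) (Ne.symm hj₀)
    exact Summable.tsum_pos hsum (fun j => Real.rpow_nonneg (hk.nonneg j) _) j₀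
      (Real.rpow_pos_of_pos hkj₀ _)
  refine ⟨1 / (2 * C₀ * Chat ^ (1/δ)), by positivity, ?_⟩
  intro x u hu
  obtain ⟨M, hM⟩ := hu
  have hM0 : 0 ≤ M := le_trans (abs_nonneg _) (hM 0)
  have hMb : ∀ y : ℤ, -M ≤ u y ∧ u y ≤ M := fun y => abs_le.mp (hM y)
  set b : ℤ → ℝ := fun j => u (x + j) - u x with hb
  have hbabs : ∀ j, |b j| ≤ 2 * M := by
    intro j
    have h1 := hMb (x + j); have h2 := hMb x
    rw [abs_le]; constructor <;> simp only [hb] <;> linarith [h1.1, h1.2, h2.1, h2.2]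
  set F : ℤ × ℤ → ℝ := fun p => k p.1 * k p.2 * Real.exp (u (x + p.2) - u x) *
    Ups (u (x + p.1 + p.2) - u (x + p.1) - u (x + p.2) + u x) with hF
  have hPsi2 : Psi2 k u x = (1/2) * ∑' p : ℤ × ℤ, F p := rfl
  have hFnonneg : ∀ p, 0 ≤ F p := fun p =>
    mul_nonneg (mul_nonneg (mul_nonneg (hk.nonneg _) (hk.nonneg _)) (Real.exp_pos _).le)
      (Ups_nonneg _)
  set CF : ℝ := Real.exp (2*M) * (Real.exp (4*M) + 4*M) with hCF
  have hFub : ∀ p, F p ≤ k p.1 * k p.2 * CF := by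
    intro p
    have e1 : Real.exp (u (x + p.2) - u x) ≤ Real.exp (2*M) := by
      apply Real.exp_le_exp.mpr
      have h1 := hMb (x + p.2); have h2 := hMb x
      linarith [h1.1, h1.2, h2.1, h2.2]
    have e2 : Ups (u (x + p.1 + p.2) - u (x + p.1) - u (x + p.2) + u x)
        ≤ Real.exp (4*M) + 4*M := by
      have h1 := hMb (x + p.1 + p.2); have h2 := hMb (x + p.1)
      have h3 := hMb (x + p.2); have h4 := hMb x
      have hr1 : u (x + p.1 + p.2) - u (x + p.1) - u (x + p.2) + u x ≤ 4*M := by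
        linarith [h1.2, h2.1, h3.1, h4.2]
      have hr2 : -(4*M) ≤ u (x + p.1 + p.2) - u (x + p.1) - u (x + p.2) + u x := by
        linarith [h1.1, h2.2, h3.2, h4.1]
      have := Real.exp_le_exp.mpr hr1
      simp only [Ups]
      linarith
    calc F p = (k p.1 * k p.2) * (Real.exp (u (x + p.2) - u x) *
          Ups (u (x + p.1 + p.2) - u (x + p.1) - u (x + p.2) + u x)) := by
          simp only [hF]; ring
      _ ≤ (k p.1 * k p.2) * CF := by
          apply mul_le_mul_of_nonneg_left _ (mul_nonneg (hk.nonneg _) (hk.nonneg _))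
          rw [hCF]
          exact mul_le_mul e1 e2 (Ups_nonneg _) (Real.exp_pos _).le
      _ = k p.1 * k p.2 * CF := by ring
  have hFsum : Summable F :=
    Summable.of_nonneg_of_le hFnonneg hFub
      ((hk.summable.mul_of_nonneg hk.summable hk.nonneg hk.nonneg).mul_right CF)
  set g : ℤ → ℝ := fun j => k j ^ 2 * Real.exp (b (-j)) * Ups (-(b j + b (-j))) with hg
  have hgF : ∀ j : ℤ, g j = F (j, -j) := by
    intro j
    have h1 : x + j + -j = x := by ring
    simp only [hg, hF, hb, h1, hk.symm j]
    rw [show -(u (x + j) - u x + (u (x + -j) - u x)) =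
      u x - u (x + j) - u (x + -j) + u x from by ring]
    ring
  have hi_inj : Function.Injective (fun j : ℤ => ((j, -j) : ℤ × ℤ)) := by
    intro a b h
    simpa using congrArg Prod.fst h
  have hgsum : Summable g :=
    (hFsum.comp_injective hi_inj).congr (fun j => (hgF j).symm)
  have step1 : ∑' j : ℤ, g j ≤ ∑' p : ℤ × ℤ, F p :=
    Summable.tsum_le_tsum_of_inj _ hi_inj (fun c _ => hFnonneg c) (fun j => le_of_eq (hgF j))
      hgsum hFsum
  set z : ℤ → ℝ := fun j => |b j + b (-j)| / 2 with hz
  have hz0 : ∀ j, 0 ≤ z j := fun j => by positivity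
  have hzle : ∀ j, z j ≤ 2 * M := by
    intro j
    have h1 := hbabs j; have h2 := hbabs (-j)
    have : |b j + b (-j)| ≤ 4 * M := by
      calc |b j + b (-j)| ≤ |b j| + |b (-j)| := abs_add_le _ _
        _ ≤ 4 * M := by linarith
    simp only [hz]; linarith
  set W : ℤ → ℝ := fun j => k j ^ 2 * Ups (z j) with hW
  have hWnonneg : ∀ j, 0 ≤ W j := fun j => mul_nonneg (sq_nonneg _) (Ups_nonneg _)
  have hgneg_sum : Summable (fun j : ℤ => g (-j)) :=
    (hgsum.comp_injective neg_injective).congr (fun j => rfl)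
  have hgnegval : ∀ j : ℤ, g (-j) = k j ^ 2 * Real.exp (b j) * Ups (-(b j + b (-j))) := by
    intro j
    simp only [hg, neg_neg, hk.symm j]
    rw [show -(b (-j) + b j) = -(b j + b (-j)) from by ring]
  have hWle : ∀ j, W j ≤ (g j + g (-j)) / 2 := by
    intro j
    have key1 : Ups (z j) ≤ Real.exp ((b j + b (-j))/2) * Ups (-(b j + b (-j))) := by
      have := Ups_abs_half_le (b j + b (-j))
      simpa [hz] using this
    have key2 : 2 * Real.exp ((b j + b (-j))/2) ≤ Real.exp (b j) + Real.exp (b (-j)) :=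
      two_exp_avg_le (b j) (b (-j))
    have hU := Ups_nonneg (-(b j + b (-j)))
    have hksq := sq_nonneg (k j)
    calc W j = k j ^ 2 * Ups (z j) := rfl
      _ ≤ k j ^ 2 * (Real.exp ((b j + b (-j))/2) * Ups (-(b j + b (-j)))) :=
          mul_le_mul_of_nonneg_left key1 hksq
      _ = (2 * Real.exp ((b j + b (-j))/2)) * (k j ^ 2 * Ups (-(b j + b (-j)))) / 2 := by
          ring
      _ ≤ (Real.exp (b j) + Real.exp (b (-j))) * (k j ^ 2 * Ups (-(b j + b (-j)))) / 2 := by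
          have hmul : (2 * Real.exp ((b j + b (-j))/2)) * (k j ^ 2 * Ups (-(b j + b (-j))))
              ≤ (Real.exp (b j) + Real.exp (b (-j))) * (k j ^ 2 * Ups (-(b j + b (-j)))) :=
            mul_le_mul_of_nonneg_right key2 (mul_nonneg hksq hU)
          linarith
      _ = (g j + g (-j)) / 2 := by
          rw [hgnegval j]; simp only [hg]; ring
  -- summability of W and the tsum chain
  have hWsum : Summable W :=
    Summable.of_nonneg_of_le hWnonneg hWle ((hgsum.add hgneg_sum).div_const 2)
  have hgneg_tsum : ∑' j : ℤ, g (-j) = ∑' j : ℤ, g j := by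
    simpa using (Equiv.neg ℤ).tsum_eq g
  have step2 : ∑' j : ℤ, W j ≤ ∑' j : ℤ, g j := by
    calc ∑' j : ℤ, W j ≤ ∑' j : ℤ, (g j + g (-j)) / 2 :=
          Summable.tsum_le_tsum hWle hWsum ((hgsum.add hgneg_sum).div_const 2)
      _ = (∑' j : ℤ, (g j + g (-j))) / 2 := tsum_div_const
      _ = (∑' j : ℤ, g j + ∑' j : ℤ, g (-j)) / 2 := by rw [Summable.tsum_add hgsum hgneg_sum]
      _ = ∑' j : ℤ, g j := by rw [hgneg_tsum]; ring
  have hPsiW : (1/2) * ∑' j : ℤ, W j ≤ Psi2 k u x := by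
    rw [hPsi2]
    have := le_trans step2 step1
    linarith
  -- bounding |Lop|
  have hLsum1 : Summable fun j : ℤ => k j * b j := by
    apply Summable.of_abs
    apply Summable.of_nonneg_of_le (fun j => abs_nonneg _) _ (hk.summable.mul_right (2*M))
    intro j
    rw [abs_mul, abs_of_nonneg (hk.nonneg j)]
    exact mul_le_mul_of_nonneg_left (hbabs j) (hk.nonneg j)
  have hLsum2 : Summable fun j : ℤ => k j * b (-j) := by
    apply Summable.of_abs
    apply Summable.of_nonneg_of_le (fun j => abs_nonneg _) _ (hk.summable.mul_right (2*M))
    intro j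
    rw [abs_mul, abs_of_nonneg (hk.nonneg j)]
    exact mul_le_mul_of_nonneg_left (hbabs (-j)) (hk.nonneg j)
  have hLval : Lop k u x = ∑' j : ℤ, k j * b j := rfl
  have hLneg : ∑' j : ℤ, k j * b (-j) = ∑' j : ℤ, k j * b j := by
    have h1 : ∑' j : ℤ, k j * b (-j) = ∑' j : ℤ, k (-j) * b (-j) :=
      tsum_congr (fun j => by rw [hk.symm j])
    have h2 : ∑' j : ℤ, k (-j) * b (-j) = ∑' j : ℤ, k j * b j := by
      simpa using (Equiv.neg ℤ).tsum_eq (fun j => k j * b j)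
    rw [h1, h2]
  have hhalf : Lop k u x = ∑' j : ℤ, k j * ((b j + b (-j)) / 2) := by
    have h1 : ∑' j : ℤ, k j * ((b j + b (-j)) / 2)
        = ∑' j : ℤ, (k j * b j + k j * b (-j)) / 2 :=
      tsum_congr (fun j => by ring)
    rw [h1, tsum_div_const, Summable.tsum_add hLsum1 hLsum2, hLneg, hLval]
    ring
  have hkz : Summable fun j : ℤ => k j * z j := by
    apply Summable.of_nonneg_of_le (fun j => mul_nonneg (hk.nonneg j) (hz0 j)) _
      (hk.summable.mul_right (2*M))
    exact fun j => mul_le_mul_of_nonneg_left (hzle j) (hk.nonneg j)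
  have habsL : |Lop k u x| ≤ ∑' j : ℤ, k j * z j := by
    rw [hhalf]
    have habs_eq : ∀ j : ℤ, ‖k j * ((b j + b (-j)) / 2)‖ = k j * z j := by
      intro j
      rw [Real.norm_eq_abs, abs_mul, abs_of_nonneg (hk.nonneg j), abs_div, abs_two]
    have hnorm : Summable fun j : ℤ => ‖k j * ((b j + b (-j)) / 2)‖ :=
      hkz.congr (fun j => (habs_eq j).symm)
    calc |∑' j : ℤ, k j * ((b j + b (-j)) / 2)|
        = ‖∑' j : ℤ, k j * ((b j + b (-j)) / 2)‖ := (Real.norm_eq_abs _).symm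
      _ ≤ ∑' j : ℤ, ‖k j * ((b j + b (-j)) / 2)‖ := norm_tsum_le_tsum_norm hnorm
      _ = ∑' j : ℤ, k j * z j := tsum_congr habs_eq
  -- Hölder step
  set a : ℤ → ℝ := fun j => C₀ * W j with ha
  have hanonneg : ∀ j, 0 ≤ a j := fun j => mul_nonneg hC₀pos.le (hWnonneg j)
  have hasum : Summable a := hWsum.mul_left C₀
  set A : ℝ := ∑' j : ℤ, a j with hA
  have hA0 : 0 ≤ A := tsum_nonneg hanonneg
  have hAeq : A = C₀ * ∑' j : ℤ, W j := by rw [hA, ha]; exact tsum_mul_left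
  have hexp1 : 2 * θ + (1 - δ) * (1 - θ) = 1 := by
    rw [hθdef]; field_simp; ring
  have hpt : ∀ j : ℤ, k j * z j ≤ a j ^ θ * (k j ^ (1 - δ)) ^ (1 - θ) := by
    intro j
    rcases eq_or_lt_of_le (hk.nonneg j) with h0 | h0
    · have hkj : k j = 0 := h0.symm
      have hδne : (1:ℝ) - δ ≠ 0 := by linarith
      simp [ha, hW, hkj, Real.zero_rpow hδne, Real.zero_rpow (ne_of_gt hθ0)]
    · have hzj := hz0 j
      have h1 : z j ≤ (C₀ * Ups (z j)) ^ θ := by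
        have hAineq := rpow_le_factorial_mul_Ups hγ2 hzj
        have h2 : (z j ^ γ) ^ θ ≤ (C₀ * Ups (z j)) ^ θ :=
          Real.rpow_le_rpow (Real.rpow_nonneg hzj _) hAineq hθ0.le
        rwa [← Real.rpow_mul hzj, hγθ, Real.rpow_one] at h2
      have h2 : k j = (k j ^ 2) ^ θ * (k j ^ (1 - δ)) ^ (1 - θ) := by
        rw [← Real.rpow_natCast (k j) 2, ← Real.rpow_mul h0.le, ← Real.rpow_mul h0.le,
          ← Real.rpow_add h0]
        norm_num
        rw [show 2 * θ + (1 - δ) * (1 - θ) = 1 from hexp1, Real.rpow_one]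
      calc k j * z j ≤ k j * (C₀ * Ups (z j)) ^ θ :=
            mul_le_mul_of_nonneg_left h1 (hk.nonneg j)
        _ = ((k j ^ 2) ^ θ * (k j ^ (1 - δ)) ^ (1 - θ)) * (C₀ * Ups (z j)) ^ θ := by
            rw [← h2]
        _ = ((k j ^ 2) ^ θ * (C₀ * Ups (z j)) ^ θ) * (k j ^ (1 - δ)) ^ (1 - θ) := by ring
        _ = a j ^ θ * (k j ^ (1 - δ)) ^ (1 - θ) := by
            rw [← Real.mul_rpow (sq_nonneg _) (mul_nonneg hC₀pos.le (Ups_nonneg _))]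
            congr 2
            simp only [ha, hW]; ring
  have hconj : Real.HolderConjugate γ (1 + δ) := by
    rw [Real.holderConjugate_iff]
    constructor
    · exact hγ1
    · rw [hγdef]; field_simp; ring
  have hT : ∑' j : ℤ, k j * z j ≤ A ^ θ * Chat ^ (1 - θ) := by
    apply Summable.tsum_le_of_sum_le hkz
    intro sfin
    have hstep : ∑ j ∈ sfin, k j * z j
        ≤ ∑ j ∈ sfin, (a j ^ θ) * ((k j ^ (1 - δ)) ^ (1 - θ)) :=
      Finset.sum_le_sum (fun j _ => hpt j)
    have hHold := Real.inner_le_Lp_mul_Lq_of_nonneg sfin hconj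
      (f := fun j => a j ^ θ) (g := fun j => (k j ^ (1 - δ)) ^ (1 - θ))
      (fun j _ => Real.rpow_nonneg (hanonneg j) _)
      (fun j _ => Real.rpow_nonneg (Real.rpow_nonneg (hk.nonneg j) _) _)
    have e1 : ∀ j : ℤ, (a j ^ θ) ^ γ = a j := by
      intro j
      rw [← Real.rpow_mul (hanonneg j), hθγ, Real.rpow_one]
    have e2 : ∀ j : ℤ, ((k j ^ (1 - δ)) ^ (1 - θ)) ^ (1 + δ) = k j ^ (1 - δ) := by
      intro j
      rw [← Real.rpow_mul (Real.rpow_nonneg (hk.nonneg j) _)]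
      rw [show (1 - θ) * (1 + δ) = 1 from by rw [hθdef]; field_simp; ring, Real.rpow_one]
    have e3 : (1:ℝ) / γ = θ := by
      rw [hγdef, hθdef]; rw [one_div, inv_div]
    have e4 : (1:ℝ) / (1 + δ) = 1 - θ := by
      rw [hθdef]; field_simp; ring
    rw [Finset.sum_congr rfl (fun j _ => e1 j), Finset.sum_congr rfl (fun j _ => e2 j),
      e3, e4] at hHold
    have hsub1 : ∑ j ∈ sfin, a j ≤ A :=
      Summable.sum_le_tsum sfin (fun j _ => hanonneg j) hasum
    have hsub2 : ∑ j ∈ sfin, k j ^ (1 - δ) ≤ Chat :=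
      Summable.sum_le_tsum sfin (fun j _ => Real.rpow_nonneg (hk.nonneg j) _) hsum
    have hfin : (∑ j ∈ sfin, a j) ^ θ * (∑ j ∈ sfin, k j ^ (1 - δ)) ^ (1 - θ)
        ≤ A ^ θ * Chat ^ (1 - θ) := by
      apply mul_le_mul
      · exact Real.rpow_le_rpow (Finset.sum_nonneg (fun j _ => hanonneg j)) hsub1 hθ0.le
      · exact Real.rpow_le_rpow
          (Finset.sum_nonneg (fun j _ => Real.rpow_nonneg (hk.nonneg j) _)) hsub2
          (by linarith)
      · exact Real.rpow_nonneg
          (Finset.sum_nonneg (fun j _ => Real.rpow_nonneg (hk.nonneg j) _)) _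
      · exact Real.rpow_nonneg hA0 _
    exact le_trans hstep (le_trans hHold hfin)
  -- final assembly
  have hLfin : |Lop k u x| ≤ A ^ θ * Chat ^ (1 - θ) := le_trans habsL hT
  have hLγ : |Lop k u x| ^ γ ≤ A * Chat ^ (1/δ) := by
    have h1 : |Lop k u x| ^ γ ≤ (A ^ θ * Chat ^ (1 - θ)) ^ γ :=
      Real.rpow_le_rpow (abs_nonneg _) hLfin (by linarith)
    have h2 : (A ^ θ * Chat ^ (1 - θ)) ^ γ = A * Chat ^ (1/δ) := by
      rw [Real.mul_rpow (Real.rpow_nonneg hA0 _) (Real.rpow_nonneg hChatpos.le _),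
        ← Real.rpow_mul hA0, ← Real.rpow_mul hChatpos.le, hθγ, Real.rpow_one,
        show (1 - θ) * γ = 1/δ from by rw [hθdef, hγdef]; field_simp; ring]
    rw [← h2]; exact h1
  have hXpos : (0:ℝ) < Chat ^ (1/δ) := Real.rpow_pos_of_pos hChatpos _
  calc 1 / (2 * C₀ * Chat ^ (1/δ)) * |Lop k u x| ^ γ
      ≤ 1 / (2 * C₀ * Chat ^ (1/δ)) * (A * Chat ^ (1/δ)) := by
        apply mul_le_mul_of_nonneg_left hLγ (by positivity)
    _ = (1/2) * ∑' j : ℤ, W j := by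
        rw [hAeq]; field_simp
    _ ≤ Psi2 k u x := hPsiW
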